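/- Let X, Y be pseudometric spaces of diameter ≤ 1, Y × X with the max metric, and let R be an ε-predicate on Y × X with associated function f_R : Y × X → [0,1]. Then the function x ↦ inf_{y ∈ Y} f_R(y,x) is uniformly continuous with modulus ε, and the ε-predicate it corresponds to is the smallest ε-predicate on X containing the family r ↦ { x | ∃ y, (y,x) ∈ R(r) }. -/

import Mathlib

open Set

/-- A pseudometric space of diameter ≤ 1. -/
structure PMet where
  carrier : Type
  d : carrier → carrier → ℝ
  d_self : ∀ x, d x x = 0
  d_symm : ∀ x y, d x y = d y x
  d_triangle : ∀ x y z, d x z ≤ d x y + d y z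
  d_nonneg : ∀ x y, 0 ≤ d x y
  d_le_one : ∀ x y, d x y ≤ 1

/-- Uniform continuity of a map between diameter-≤1 pseudometric spaces. -/
def UnifCont (X Y : PMet) (f : X.carrier → Y.carrier) : Prop :=
  ∀ e : ℝ, 0 < e → ∃ δ : ℝ, 0 < δ ∧ ∀ x y, X.d x y < δ → Y.d (f x) (f y) < e

/-- A modulus of uniform continuity: increasing, infima-preserving, fixing 0,
    mapping [0,1] into [0,1]. -/
def IsModulus (μ : ℝ → ℝ) : Prop :=
  μ 0 = 0 ∧
  (∀ r ∈ Icc (0:ℝ) 1, μ r ∈ Icc (0:ℝ) 1) ∧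
  (∀ r s, r ∈ Icc (0:ℝ) 1 → s ∈ Icc (0:ℝ) 1 → r ≤ s → μ r ≤ μ s) ∧
  (∀ S : Set ℝ, S.Nonempty → S ⊆ Icc (0:ℝ) 1 → μ (sInf S) = sInf (μ '' S))

/-- `f` is uniformly continuous with modulus `μ`. -/
def HasModulus (X Y : PMet) (f : X.carrier → Y.carrier) (μ : ℝ → ℝ) : Prop :=
  ∀ x y, Y.d (f x) (f y) ≤ μ (X.d x y)

/-- An ε-predicate on `X`: a monotone family of subsets, preserving nonempty
    infima as intersections, satisfying the ε-continuity condition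
    (with truncated addition on [0,1]). -/
def IsPred (X : PMet) (μ : ℝ → ℝ) (R : ℝ → Set X.carrier) : Prop :=
  (∀ r s, r ∈ Icc (0:ℝ) 1 → s ∈ Icc (0:ℝ) 1 → r ≤ s → R r ⊆ R s) ∧
  (∀ S : Set ℝ, S.Nonempty → S ⊆ Icc (0:ℝ) 1 → R (sInf S) = ⋂ r ∈ S, R r) ∧
  (∀ r s, r ∈ Icc (0:ℝ) 1 → s ∈ Icc (0:ℝ) 1 → ∀ x y, x ∈ R r → X.d x y ≤ s →
     y ∈ R (min (r + μ s) 1))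

/-- The product pseudometric space with the max metric. -/
def prodPMet (Y Z : PMet) : PMet where
  carrier := Y.carrier × Z.carrier
  d p q := max (Y.d p.1 q.1) (Z.d p.2 q.2)
  d_self p := by simp [Y.d_self, Z.d_self]
  d_symm p q := by rw [Y.d_symm, Z.d_symm]
  d_triangle p q r := max_le
    (le_trans (Y.d_triangle _ _ _) (add_le_add (le_max_left _ _) (le_max_left _ _)))
    (le_trans (Z.d_triangle _ _ _) (add_le_add (le_max_right _ _) (le_max_right _ _)))
  d_nonneg p q := le_trans (Y.d_nonneg _ _) (le_max_left _ _)
  d_le_one p q := max_le (Y.d_le_one _ _) (Z.d_le_one _ _)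

/-- infimum over Y of f_R is uniformly continuous with modulus ε and
    corresponds to the smallest ε-predicate containing the existential image of R. -/
theorem exists_quantifier (X Y : PMet) [Nonempty Y.carrier] (ε : ℝ → ℝ)
    (hε : IsModulus ε) (R : ℝ → Set (prodPMet Y X).carrier)
    (hR : IsPred (prodPMet Y X) ε R) (hR1 : R 1 = Set.univ) :
    let fR : (prodPMet Y X).carrier → ℝ :=
      fun p => sInf {r | r ∈ Icc (0:ℝ) 1 ∧ p ∈ R r}
    let g : X.carrier → ℝ :=
      fun x => sInf (Set.range fun y : Y.carrier =>
        fR ((y, x) : (prodPMet Y X).carrier))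
    (∀ x x', |g x - g x'| ≤ ε (X.d x x')) ∧
    IsPred X ε (fun r => {x | g x ≤ r}) ∧
    (∀ r ∈ Icc (0:ℝ) 1,
      {x | ∃ y : Y.carrier, ((y, x) : (prodPMet Y X).carrier) ∈ R r} ⊆
        {x | g x ≤ r}) ∧
    (∀ P : ℝ → Set X.carrier, IsPred X ε P →
      (∀ r ∈ Icc (0:ℝ) 1,
        {x | ∃ y : Y.carrier, ((y, x) : (prodPMet Y X).carrier) ∈ R r} ⊆ P r) →
      ∀ r ∈ Icc (0:ℝ) 1, {x | g x ≤ r} ⊆ P r) := by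
  intro fR g
  obtain ⟨hε0, hεmap, hεmono, hεinf⟩ := hε
  obtain ⟨hRmono, hRinf, hRcont⟩ := hR
  -- basic facts about fR
  have hSne : ∀ p, Set.Nonempty {r | r ∈ Icc (0:ℝ) 1 ∧ p ∈ R r} := by
    intro p
    exact ⟨1, ⟨by norm_num, by simp [hR1]⟩⟩
  have hSbdd : ∀ p, BddBelow {r | r ∈ Icc (0:ℝ) 1 ∧ p ∈ R r} := by
    intro p
    exact ⟨0, fun r hr => hr.1.1⟩
  have hSsub : ∀ p, {r | r ∈ Icc (0:ℝ) 1 ∧ p ∈ R r} ⊆ Icc (0:ℝ) 1 :=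
    fun p r hr => hr.1
  have fR_mem : ∀ p, fR p ∈ Icc (0:ℝ) 1 := by
    intro p
    constructor
    · exact le_csInf (hSne p) (fun r hr => hr.1.1)
    · exact csInf_le (hSbdd p) ⟨by norm_num, by simp [hR1]⟩
  have mem_R_fR : ∀ p, p ∈ R (fR p) := by
    intro p
    have := hRinf _ (hSne p) (hSsub p)
    show p ∈ R (sInf _)
    rw [this]
    exact Set.mem_iInter₂.2 (fun r hr => hr.2)
  have fR_le_iff : ∀ p, ∀ r ∈ Icc (0:ℝ) 1, (fR p ≤ r ↔ p ∈ R r) := by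
    intro p r hr
    constructor
    · intro h
      exact hRmono _ _ (fR_mem p) hr h (mem_R_fR p)
    · intro h
      exact csInf_le (hSbdd p) ⟨hr, h⟩
  have fR_lip : ∀ p q, fR q ≤ fR p + ε ((prodPMet Y X).d p q) := by
    intro p q
    have hd : (prodPMet Y X).d p q ∈ Icc (0:ℝ) 1 :=
      ⟨(prodPMet Y X).d_nonneg p q, (prodPMet Y X).d_le_one p q⟩
    have h := hRcont _ _ (fR_mem p) hd p q (mem_R_fR p) le_rfl
    have hεd : ε ((prodPMet Y X).d p q) ∈ Icc (0:ℝ) 1 := hεmap _ hd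
    have hmin : min (fR p + ε ((prodPMet Y X).d p q)) 1 ∈ Icc (0:ℝ) 1 := by
      constructor
      · exact le_min (by linarith [(fR_mem p).1, hεd.1]) one_pos.le
      · exact min_le_right _ _
    have := (fR_le_iff q _ hmin).2 h
    exact this.trans (min_le_left _ _)
  -- basic facts about g
  have grange_ne : ∀ x : X.carrier,
      (Set.range fun y : Y.carrier => fR ((y, x) : (prodPMet Y X).carrier)).Nonempty :=
    fun x => Set.range_nonempty _
  have grange_bdd : ∀ x : X.carrier,
      BddBelow (Set.range fun y : Y.carrier => fR ((y, x) : (prodPMet Y X).carrier)) := by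
    intro x
    exact ⟨0, fun r ⟨y, hy⟩ => hy ▸ (fR_mem _).1⟩
  have g_mem : ∀ x, g x ∈ Icc (0:ℝ) 1 := by
    intro x
    constructor
    · exact le_csInf (grange_ne x) (fun r ⟨y, hy⟩ => hy ▸ (fR_mem _).1)
    · obtain ⟨y⟩ := ‹Nonempty Y.carrier›
      exact (csInf_le (grange_bdd x) ⟨y, rfl⟩).trans (fR_mem _).2
  have g_le : ∀ (x : X.carrier) (y : Y.carrier),
      g x ≤ fR ((y, x) : (prodPMet Y X).carrier) := by
    intro x y
    exact csInf_le (grange_bdd x) ⟨y, rfl⟩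
  have d_eq : ∀ (y : Y.carrier) (x x' : X.carrier),
      (prodPMet Y X).d (y, x) (y, x') = X.d x x' := by
    intro y x x'
    show max (Y.d y y) (X.d x x') = X.d x x'
    rw [Y.d_self]
    exact max_eq_right (X.d_nonneg x x')
  have g_lip : ∀ x x', g x' ≤ g x + ε (X.d x x') := by
    intro x x'
    have : ∀ y : Y.carrier, g x' - ε (X.d x x') ≤ fR ((y, x) : (prodPMet Y X).carrier) := by
      intro y
      have h1 := g_le x' y
      have h2 := fR_lip ((y, x) : (prodPMet Y X).carrier) ((y, x') : (prodPMet Y X).carrier)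
      rw [d_eq] at h2
      linarith
    have := le_csInf (grange_ne x) (fun r hr => by obtain ⟨y, rfl⟩ := hr; exact this y)
    linarith
  refine ⟨?_, ⟨?_, ?_, ?_⟩, ?_, ?_⟩
  · -- |g x - g x'| ≤ ε (X.d x x')
    intro x x'
    rw [abs_le]
    constructor
    · have := g_lip x x'
      linarith
    · have := g_lip x' x
      rw [X.d_symm x' x] at this
      linarith
  · -- monotone
    intro r s _ _ hrs x hx
    exact le_trans hx hrs
  · -- infima
    intro S hSne' hSsub'
    ext x
    simp only [Set.mem_setOf_eq, Set.mem_iInter]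
    constructor
    · intro h r hr
      exact h.trans (csInf_le ⟨0, fun t ht => (hSsub' ht).1⟩ hr)
    · intro h
      exact le_csInf hSne' h
  · -- ε-continuity
    intro r s hr hs x x' hx hd
    have hdx : X.d x x' ∈ Icc (0:ℝ) 1 := ⟨X.d_nonneg x x', X.d_le_one x x'⟩
    have h1 : g x' ≤ r + ε s := by
      have := g_lip x x'
      have hmono := hεmono _ _ hdx hs hd
      simp only [Set.mem_setOf_eq] at hx
      linarith
    exact le_min h1 (g_mem x').2
  · -- containment
    intro r hr x ⟨y, hy⟩
    exact (g_le x y).trans ((fR_le_iff _ r hr).2 hy)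
  · -- minimality
    intro P hP hPcont r hr x hx
    simp only [Set.mem_setOf_eq] at hx
    obtain ⟨hPmono, hPinf, _⟩ := hP
    rcases eq_or_lt_of_le hr.2 with h1 | h1
    · -- r = 1
      subst h1
      obtain ⟨y⟩ := ‹Nonempty Y.carrier›
      exact hPcont 1 (by norm_num) ⟨y, by simp [hR1]; exact Set.mem_univ _⟩
    · -- r < 1
      have hIoc_ne : (Ioc r 1).Nonempty := ⟨1, h1, le_rfl⟩
      have hIoc_sub : Ioc r 1 ⊆ Icc (0:ℝ) 1 := fun t ht => ⟨hr.1.trans ht.1.le, ht.2⟩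
      have hinf : sInf (Ioc r 1) = r := csInf_Ioc h1
      have : x ∈ ⋂ t ∈ Ioc r 1, P t := by
        refine Set.mem_iInter₂.2 (fun t ht => ?_)
        have hgt : g x < t := lt_of_le_of_lt hx ht.1
        obtain ⟨_, ⟨y, rfl⟩, hy⟩ := exists_lt_of_csInf_lt (grange_ne x) hgt
        have : ((y, x) : (prodPMet Y X).carrier) ∈ R t :=
          (fR_le_iff ((y, x) : (prodPMet Y X).carrier) t (hIoc_sub ht)).1 hy.le
        exact hPcont t (hIoc_sub ht) ⟨y, this⟩
      rw [← hPinf _ hIoc_ne hIoc_sub, hinf] at this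
      exact this
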